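/- Let A and B be unital *-algebras over C = R(i), R an ordered ring, and let E be a B-A-bimodule equipped with an A-valued inner product ⟨·,·⟩: E × E → A which is C-linear in the second argument, satisfies ⟨x,y⟩ = ⟨y,x⟩*, ⟨x, y·A⟩ = ⟨x,y⟩A, is compatible with the B-action in the sense ⟨B·x, y⟩ = ⟨x, B*·y⟩, and is completely positive: for all n and x₁,…,xₙ ∈ E the matrix (⟨x_i,x_j⟩) ∈ M_n(A) is a positive element. Let (H, π) be a *-representation of A. Then on the tensor product K̃ = E ⊗_A H the formula ⟨x⊗φ, y⊗ψ⟩ := ⟨φ, π(⟨x,y⟩)ψ⟩ extends to a well-defined Hermitian sesquilinear form which is positive semidefinite, and the B-action B·(x⊗φ) = (B·x)⊗φ descends to the quotient K = K̃ / K̃^⊥ by the degeneracy space and yields a *-representation ρ of B on the pre-Hilbert space K. -/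

import Mathlib

open Polynomial

/-- An *ordered ring*: positivity cone `P` with `P·P ⊆ P`, `P + P ⊆ P`,
`R = −P ∪ {0} ∪ P` disjointly. -/
def IsOrderedCone {R : Type*} [CommRing R] (P : Set R) : Prop :=
  (∀ a ∈ P, ∀ b ∈ P, a * b ∈ P) ∧
  (∀ a ∈ P, ∀ b ∈ P, a + b ∈ P) ∧
  (∀ a : R, a ∈ P ∨ a = 0 ∨ -a ∈ P) ∧
  (∀ a ∈ P, a ≠ (0 : R)) ∧
  (∀ a ∈ P, -a ∉ P)

noncomputable section

set_option maxRecDepth 8000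

/-- The ring extension `C = R(i)` of `R` by a square root `i` of `-1`. -/
abbrev Cplx (R : Type*) [CommRing R] := AdjoinRoot (X ^ 2 + 1 : R[X])

/-- The square root of `-1` in `C = R(i)`. -/
def Cplx.I (R : Type*) [CommRing R] : Cplx R := AdjoinRoot.root _

/-- Complex conjugation `z ↦ z̄` on `C = R(i)`: the ring endomorphism fixing `R`
and sending `i` to `-i`. -/
def Cplx.conj {R : Type*} [CommRing R] : Cplx R →+* Cplx R :=
  AdjoinRoot.lift (algebraMap R _) (-(AdjoinRoot.root _)) (by
    have h := AdjoinRoot.eval₂_root (X ^ 2 + 1 : R[X])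
    rw [AdjoinRoot.algebraMap_eq]
    simp only [eval₂_add, eval₂_pow, eval₂_X, eval₂_one, neg_sq] at h ⊢
    exact h)

/-- `z ∈ C = R(i)` is *nonnegative* (w.r.t. the cone `P` of `R`) if it lies in `R`
and is zero or positive there. -/
def Cplx.nonneg {R : Type*} [CommRing R] (P : Set R) (z : Cplx R) : Prop :=
  ∃ r : R, (r ∈ P ∨ r = 0) ∧ z = algebraMap R (Cplx R) r

/-- `z ∈ C = R(i)` is *positive* if it lies in `R` and is positive there. -/
def Cplx.pos {R : Type*} [CommRing R] (P : Set R) (z : Cplx R) : Prop :=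
  ∃ r ∈ P, z = algebraMap R (Cplx R) r

/-- `z ≤ w` in `C = R(i)` iff `w - z` is nonnegative. -/
def Cplx.le {R : Type*} [CommRing R] (P : Set R) (z w : Cplx R) : Prop :=
  Cplx.nonneg P (w - z)

universe u v v' w wH

/-- A `*`-algebra over `C = R(i)`: an associative unital `C`-algebra `A` equipped with
an involutive anti-linear anti-automorphism (a `*`-involution). -/
structure StarStructure (R : Type*) [CommRing R] (A : Type*) [Ring A]
    [Algebra (Cplx R) A] where
  star : A → A
  star_add : ∀ a b : A, star (a + b) = star a + star b
  star_mul : ∀ a b : A, star (a * b) = star b * star a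
  star_star : ∀ a : A, star (star a) = a
  star_smul : ∀ (z : Cplx R) (a : A), star (z • a) = Cplx.conj z • star a
  star_one : star (1 : A) = 1

/-- A `C`-linear functional `ω : A → C` is *positive* if `ω(a* a) ≥ 0` for all `a`. -/
def IsPosFunctional {R : Type*} [CommRing R] (P : Set R) {A : Type*} [Ring A]
    [Algebra (Cplx R) A] (S : StarStructure R A) (ω : A → Cplx R) : Prop :=
  (∀ a b : A, ω (a + b) = ω a + ω b) ∧
  (∀ (z : Cplx R) (a : A), ω (z • a) = z * ω a) ∧
  (∀ a : A, Cplx.nonneg P (ω (S.star a * a)))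

/-- A *pre-Hilbert space* structure over `C = R(i)`: an inner product which is
`C`-linear in the second argument, Hermitian, and positive definite. -/
structure PreInner (R : Type*) [CommRing R] (P : Set R) (H : Type*) [AddCommGroup H]
    [Module (Cplx R) H] where
  inner : H → H → Cplx R
  inner_add_right : ∀ φ ψ χ : H, inner φ (ψ + χ) = inner φ ψ + inner φ χ
  inner_smul_right : ∀ (z : Cplx R) (φ ψ : H), inner φ (z • ψ) = z * inner φ ψ
  inner_herm : ∀ φ ψ : H, inner φ ψ = Cplx.conj (inner ψ φ)
  inner_posdef : ∀ φ : H, φ ≠ 0 → Cplx.pos P (inner φ φ)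

/-- A `*`-representation of a `*`-algebra `A` over `C = R(i)` on a pre-Hilbert space
over `C`: a unital homomorphism into the adjointable operators `B(H)`. -/
structure StarRep (R : Type u) [CommRing R] (P : Set R) (A : Type v) [Ring A]
    [Algebra (Cplx R) A] (S : StarStructure R A) : Type (max u v (w + 1)) where
  carrier : Type w
  [grp : AddCommGroup carrier]
  [mod : Module (Cplx R) carrier]
  ip : PreInner R P carrier
  π : A → carrier → carrier
  π_add_vec : ∀ (a : A) (φ ψ : carrier), π a (φ + ψ) = π a φ + π a ψ
  π_smul_vec : ∀ (a : A) (z : Cplx R) (φ : carrier), π a (z • φ) = z • π a φ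
  π_one : ∀ φ : carrier, π 1 φ = φ
  π_add : ∀ (a b : A) (φ : carrier), π (a + b) φ = π a φ + π b φ
  π_smul : ∀ (z : Cplx R) (a : A) (φ : carrier), π (z • a) φ = z • π a φ
  π_mul : ∀ (a b : A) (φ : carrier), π (a * b) φ = π a (π b φ)
  π_star : ∀ (a : A) (φ ψ : carrier),
    ip.inner (π a φ) ψ = ip.inner φ (π (S.star a) ψ)

attribute [instance] StarRep.grp StarRep.mod


variable {R : Type*} [CommRing R] {A : Type*} [Ring A] [Algebra (Cplx R) A]

/-- The `*`-involution of the matrix `*`-algebra `M_m(A)`: `(M*)_{ij} = (M_{ji})*`. -/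
def matStar (S : StarStructure R A) {m : ℕ} (M : Matrix (Fin m) (Fin m) A) :
    Matrix (Fin m) (Fin m) A :=
  Matrix.of fun i j => S.star (M j i)

/-- A positive linear functional on the matrix `*`-algebra `M_m(A)`. -/
def IsPosMatFunctional (P : Set R) (S : StarStructure R A) {m : ℕ}
    (Ω : Matrix (Fin m) (Fin m) A → Cplx R) : Prop :=
  (∀ M N : Matrix (Fin m) (Fin m) A, Ω (M + N) = Ω M + Ω N) ∧
  (∀ (z : Cplx R) (M : Matrix (Fin m) (Fin m) A), Ω (z • M) = z * Ω M) ∧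
  (∀ M : Matrix (Fin m) (Fin m) A, Cplx.nonneg P (Ω (matStar S M * M)))

/-- A *positive element* of the matrix `*`-algebra `M_m(A)`: every positive linear
functional takes a nonnegative value on it. -/
def IsPosMatrix (P : Set R) (S : StarStructure R A) {m : ℕ}
    (M : Matrix (Fin m) (Fin m) A) : Prop :=
  ∀ Ω : Matrix (Fin m) (Fin m) A → Cplx R,
    IsPosMatFunctional P S Ω → Cplx.nonneg P (Ω M)


namespace RieffelAux
open Polynomial

variable {R : Type u} [CommRing R] {P : Set R}

lemma monic_f : (X ^ 2 + 1 : R[X]).Monic := by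
  apply monic_X_pow_add
  calc (1 : R[X]).degree ≤ 0 := degree_one_le
  _ < (2 : ℕ) := by norm_num

lemma conj_algebraMap (r : R) :
    Cplx.conj (algebraMap R (Cplx R) r) = algebraMap R (Cplx R) r := by
  rw [AdjoinRoot.algebraMap_eq]
  exact AdjoinRoot.lift_of _

lemma conj_I : Cplx.conj (Cplx.I R) = -(Cplx.I R) := AdjoinRoot.lift_root _

lemma I_mul_I : (Cplx.I R) * (Cplx.I R) = -1 := by
  have h := AdjoinRoot.eval₂_root (X ^ 2 + 1 : R[X])
  simp only [eval₂_add, eval₂_pow, eval₂_X, eval₂_one] at h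
  have h1 : (Cplx.I R) ^ 2 + 1 = 0 := h
  have h2 : (Cplx.I R) ^ 2 = -1 := by linear_combination h1
  rw [← pow_two]; exact h2

lemma cplx_subsingleton [Subsingleton R] : Subsingleton (Cplx R) := by
  constructor
  intro a b
  obtain ⟨p, rfl⟩ := AdjoinRoot.mk_surjective a
  obtain ⟨q, rfl⟩ := AdjoinRoot.mk_surjective b
  congr 1
  exact Subsingleton.elim _ _

section Coord
variable [Nontrivial R]

lemma natdeg_f : (X ^ 2 + 1 : R[X]).natDegree = 2 := by
  rw [← C_1]; exact natDegree_X_pow_add_C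

def pb : PowerBasis R (Cplx R) := AdjoinRoot.powerBasis' monic_f

lemma dim_eq : (pb (R := R)).dim = 2 := by
  rw [pb, AdjoinRoot.powerBasis'_dim, natdeg_f]

def i0 : Fin (pb (R := R)).dim := ⟨0, by rw [dim_eq]; norm_num⟩
def i1 : Fin (pb (R := R)).dim := ⟨1, by rw [dim_eq]; norm_num⟩

lemma basis_i0 : (pb (R := R)).basis i0 = 1 := by
  rw [PowerBasis.coe_basis]; norm_num [i0]

lemma basis_i1 : (pb (R := R)).basis i1 = Cplx.I R := by
  rw [PowerBasis.coe_basis]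
  simp [i1, pb, AdjoinRoot.powerBasis'_gen, Cplx.I]

lemma repr_combo (p q : R) :
    (pb (R := R)).basis.repr (algebraMap R (Cplx R) p + algebraMap R (Cplx R) q * Cplx.I R)
      = Finsupp.single i0 p + Finsupp.single i1 q := by
  have h1 : algebraMap R (Cplx R) p = p • (pb (R := R)).basis i0 := by
    rw [basis_i0, Algebra.algebraMap_eq_smul_one]
  have h2 : algebraMap R (Cplx R) q * Cplx.I R = q • (pb (R := R)).basis i1 := by
    rw [basis_i1, Algebra.smul_def]
  rw [h1, h2, map_add, map_smul, map_smul, Module.Basis.repr_self, Module.Basis.repr_self]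
  ext j
  simp [Finsupp.single_apply]

lemma i0_ne_i1 : (i0 : Fin (pb (R := R)).dim) ≠ i1 := by
  simp [i0, i1, Fin.ext_iff]

lemma combo_unique {p q : R}
    (h : algebraMap R (Cplx R) p + algebraMap R (Cplx R) q * Cplx.I R = 0) :
    p = 0 ∧ q = 0 := by
  have h' := repr_combo (R := R) p q
  rw [h, map_zero] at h'
  constructor
  · have := congrFun (congrArg (⇑) h'.symm) i0
    simpa [Finsupp.single_apply, i0_ne_i1, (i0_ne_i1 (R := R)).symm] using this
  · have := congrFun (congrArg (⇑) h'.symm) i1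
    simpa [Finsupp.single_apply, i0_ne_i1, (i0_ne_i1 (R := R)).symm] using this

lemma exists_coords (z : Cplx R) :
    ∃ p q : R, z = algebraMap R (Cplx R) p + algebraMap R (Cplx R) q * Cplx.I R := by
  set b' := (pb (R := R)).basis.reindex (finCongr dim_eq) with hb'
  have hsum := b'.sum_repr z
  rw [Fin.sum_univ_two] at hsum
  refine ⟨b'.repr z 0, b'.repr z 1, ?_⟩
  have h0 : b' 0 = 1 := by
    rw [hb', Module.Basis.reindex_apply]
    have : (finCongr (dim_eq (R := R))).symm 0 = i0 := by
      apply Fin.ext; simp [i0]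
    rw [this, basis_i0]
  have h1 : b' 1 = Cplx.I R := by
    rw [hb', Module.Basis.reindex_apply]
    have : (finCongr (dim_eq (R := R))).symm 1 = i1 := by
      apply Fin.ext; simp [i1]
    rw [this, basis_i1]
  rw [h0, h1] at hsum
  rw [Algebra.smul_def, Algebra.smul_def, mul_one] at hsum
  exact hsum.symm

end Coord

lemma alg_eq_zero {r : R} (h : algebraMap R (Cplx R) r = 0) : r = 0 := by
  rcases subsingleton_or_nontrivial R with hs | hn
  · exact Subsingleton.elim _ _
  · have : algebraMap R (Cplx R) r + algebraMap R (Cplx R) 0 * Cplx.I R = 0 := by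
      rw [map_zero, zero_mul, add_zero]; exact h
    exact (combo_unique this).1

lemma conj_conj (z : Cplx R) : Cplx.conj (Cplx.conj z) = z := by
  rcases subsingleton_or_nontrivial R with hs | hn
  · have := cplx_subsingleton (R := R)
    exact Subsingleton.elim _ _
  · obtain ⟨p, q, rfl⟩ := exists_coords z
    simp only [map_add, map_mul, map_neg, conj_algebraMap, conj_I]
    ring

section Cone
variable (hP : IsOrderedCone P)
include hP

lemma one_mem (h1 : (1 : R) ≠ 0) : (1 : R) ∈ P := by
  rcases hP.2.2.1 1 with h | h | h
  · exact h
  · exact absurd h h1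
  · have := hP.1 _ h _ h
    rw [neg_mul_neg, one_mul] at this
    exact this

lemma mul_ne_zero' {a b : R} (ha : a ≠ 0) (hb : b ≠ 0) : a * b ≠ 0 := by
  rcases hP.2.2.1 a with h1 | h1 | h1
  · rcases hP.2.2.1 b with h2 | h2 | h2
    · exact hP.2.2.2.1 _ (hP.1 _ h1 _ h2)
    · exact absurd h2 hb
    · intro hc
      exact hP.2.2.2.1 _ (hP.1 _ h1 _ h2) (by rw [mul_neg, hc, neg_zero])
  · exact absurd h1 ha
  · rcases hP.2.2.1 b with h2 | h2 | h2
    · intro hc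
      exact hP.2.2.2.1 _ (hP.1 _ h1 _ h2) (by rw [neg_mul, hc, neg_zero])
    · exact absurd h2 hb
    · intro hc
      exact hP.2.2.2.1 _ (hP.1 _ h1 _ h2) (by rw [neg_mul_neg, hc])

lemma sq_mem {a : R} (ha : a ≠ 0) : a * a ∈ P := by
  rcases hP.2.2.1 a with h | h | h
  · exact hP.1 _ h _ h
  · exact absurd h ha
  · have := hP.1 _ h _ h
    rwa [neg_mul_neg] at this

lemma memz_add {a b : R} (ha : a ∈ P ∨ a = 0) (hb : b ∈ P ∨ b = 0) :
    a + b ∈ P ∨ a + b = 0 := by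
  rcases ha with ha | rfl
  · rcases hb with hb | rfl
    · exact Or.inl (hP.2.1 _ ha _ hb)
    · rw [add_zero]; exact Or.inl ha
  · rw [zero_add]; exact hb

lemma memz_mul {a b : R} (ha : a ∈ P ∨ a = 0) (hb : b ∈ P ∨ b = 0) :
    a * b ∈ P ∨ a * b = 0 := by
  rcases ha with ha | rfl
  · rcases hb with hb | rfl
    · exact Or.inl (hP.1 _ ha _ hb)
    · rw [mul_zero]; exact Or.inr rfl
  · rw [zero_mul]; exact Or.inr rfl

lemma memz_neg_eq_zero {a : R} (ha : a ∈ P ∨ a = 0) (hb : -a ∈ P ∨ -a = 0) :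
    a = 0 := by
  rcases ha with ha | rfl
  · rcases hb with hb | hb
    · exact absurd hb (hP.2.2.2.2 _ ha)
    · exact absurd (neg_eq_zero.mp hb) (hP.2.2.2.1 _ ha)
  · rfl

omit hP in
lemma nonneg_zero : Cplx.nonneg P (0 : Cplx R) :=
  ⟨0, Or.inr rfl, (map_zero _).symm⟩

lemma nonneg_add {z w : Cplx R} (hz : Cplx.nonneg P z) (hw : Cplx.nonneg P w) :
    Cplx.nonneg P (z + w) := by
  obtain ⟨r, hr, rfl⟩ := hz
  obtain ⟨r', hr', rfl⟩ := hw
  exact ⟨r + r', memz_add hP hr hr', (map_add _ _ _).symm⟩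

lemma nonneg_sum {ι : Type*} (s : Finset ι) (f : ι → Cplx R)
    (h : ∀ i ∈ s, Cplx.nonneg P (f i)) : Cplx.nonneg P (∑ i ∈ s, f i) := by
  classical
  induction s using Finset.induction_on with
  | empty => simpa using nonneg_zero
  | insert _ _ hx ih =>
    rw [Finset.sum_insert hx]
    exact nonneg_add hP (h _ (Finset.mem_insert_self _ _))
      (ih fun i hi => h i (Finset.mem_insert_of_mem hi))

lemma nonneg_neg_eq_zero {z : Cplx R} (hz : Cplx.nonneg P z)
    (hz' : Cplx.nonneg P (-z)) : z = 0 := by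
  obtain ⟨r, hr, rfl⟩ := hz
  obtain ⟨r', hr', he⟩ := hz'
  have : algebraMap R (Cplx R) (r + r') = 0 := by
    rw [map_add, ← he, add_neg_cancel]
  have hrr : r + r' = 0 := alg_eq_zero this
  have hr2 : -r ∈ P ∨ -r = 0 := by
    rcases hr' with h | h
    · left; rwa [show -r = r' by linear_combination -hrr]
    · right; rw [show -r = r' by linear_combination -hrr]; exact h
  have : r = 0 := memz_neg_eq_zero hP hr hr2
  rw [this, map_zero]

omit hP in
lemma pos_of_nonneg_ne {z : Cplx R} (hz : Cplx.nonneg P z) (h : z ≠ 0) :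
    Cplx.pos P z := by
  obtain ⟨r, hr, rfl⟩ := hz
  rcases hr with hr | rfl
  · exact ⟨r, hr, rfl⟩
  · exact absurd (map_zero _) h

lemma mul_conj_self (z : Cplx R) :
    ∃ u : R, (u ∈ P ∨ u = 0) ∧ z * Cplx.conj z = algebraMap R (Cplx R) u ∧
      (z ≠ 0 → u ∈ P) := by
  rcases subsingleton_or_nontrivial R with hs | hn
  · have := cplx_subsingleton (R := R)
    refine ⟨0, Or.inr rfl, Subsingleton.elim _ _, fun hz => ?_⟩
    exact absurd (Subsingleton.elim _ _) hz
  · obtain ⟨p, q, rfl⟩ := exists_coords z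
    refine ⟨p * p + q * q, ?_, ?_, ?_⟩
    · rcases em (p = 0) with rfl | hp
      · rcases em (q = 0) with rfl | hq
        · right; ring
        · left; simpa using sq_mem hP hq
      · rcases em (q = 0) with rfl | hq
        · left; simpa using sq_mem hP hp
        · left; exact hP.2.1 _ (sq_mem hP hp) _ (sq_mem hP hq)
    · simp only [map_add, map_mul, conj_algebraMap, conj_I]
      linear_combination (-(algebraMap R (Cplx R) q * algebraMap R (Cplx R) q)) * I_mul_I (R := R)
    · intro hz
      rcases em (p = 0) with rfl | hp
      · rcases em (q = 0) with rfl | hq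
        · exfalso; apply hz; simp
        · simpa using sq_mem hP hq
      · rcases em (q = 0) with rfl | hq
        · simpa using sq_mem hP hp
        · exact hP.2.1 _ (sq_mem hP hp) _ (sq_mem hP hq)
lemma cs_degenerate {V : Type*} [AddCommGroup V] [Module (Cplx R) V]
    (Q : V → V → Cplx R)
    (hadd : ∀ v w u : V, Q v (w + u) = Q v w + Q v u)
    (hsmul : ∀ (z : Cplx R) (v w : V), Q v (z • w) = z * Q v w)
    (hherm : ∀ v w : V, Q v w = Cplx.conj (Q w v))
    (hpos : ∀ v : V, Cplx.nonneg P (Q v v))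
    {ξ η : V} (hξ : Q ξ ξ = 0) : Q η ξ = 0 := by
  rcases subsingleton_or_nontrivial R with hsing | hn
  · have := cplx_subsingleton (R := R)
    exact Subsingleton.elim _ _
  have haddl : ∀ v w u : V, Q (v + w) u = Q v u + Q w u := by
    intro v w u
    rw [hherm, hadd, map_add, ← hherm, ← hherm]
  have hsmull : ∀ (z : Cplx R) (v w : V), Q (z • v) w = Cplx.conj z * Q v w := by
    intro z v w
    rw [hherm, hsmul, map_mul, ← hherm]
  have hnegr : ∀ v w : V, Q v (-w) = -Q v w := by
    intro v w
    rw [← neg_one_smul (Cplx R) w, hsmul]; ring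
  have hnegl : ∀ v w : V, Q (-v) w = -Q v w := by
    intro v w
    rw [hherm, hnegr, map_neg, ← hherm]
  set d := Q η ξ with hd
  have hcd : Q ξ η = Cplx.conj d := hherm ξ η
  obtain ⟨σ, hσ, hs⟩ := hpos η
  obtain ⟨u, hu, hdu, hupos⟩ := mul_conj_self hP d
  -- first quadratic test vector
  have h1 := hpos ((algebraMap R (Cplx R) σ) • ξ + (-d) • η)
  have hval : Q ((algebraMap R (Cplx R) σ) • ξ + (-d) • η)
      ((algebraMap R (Cplx R) σ) • ξ + (-d) • η)
      = algebraMap R (Cplx R) (-(σ * u)) := by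
    rw [hadd, haddl, haddl, hsmul, hsmul, hsmull, hsmull, hsmul, hsmul, hsmull, hsmull,
      hξ, ← hd, hcd, hs]
    simp only [map_neg, map_mul, conj_algebraMap]
    linear_combination (-(algebraMap R (Cplx R) σ)) * hdu
  rw [hval] at h1
  have h2 : Cplx.nonneg P (algebraMap R (Cplx R) (σ * u)) :=
    ⟨σ * u, memz_mul hP hσ hu, rfl⟩
  have h3 : algebraMap R (Cplx R) (σ * u) = 0 := by
    apply nonneg_neg_eq_zero hP h2
    rw [← map_neg]
    exact h1
  have hσu : σ * u = 0 := alg_eq_zero h3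
  by_cases hdz : d = 0
  · exact hdz
  have hu' : u ∈ P := hupos hdz
  have hσ0 : σ = 0 := by
    by_contra hσne
    exact mul_ne_zero' hP hσne (hP.2.2.2.1 _ hu') hσu
  have hηη : Q η η = 0 := by rw [hs, hσ0, map_zero]
  -- four-point argument
  have e1 : Q (η + ξ) (η + ξ) = d + Cplx.conj d := by
    rw [hadd, haddl, haddl, hηη, hξ, hcd, ← hd]; ring
  have e2 : Q (η - ξ) (η - ξ) = -(d + Cplx.conj d) := by
    rw [sub_eq_add_neg, hadd, haddl, haddl, hnegr, hnegr, hnegl, hnegl,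
      hηη, hξ, hcd, ← hd]; ring
  have hsum0 : d + Cplx.conj d = 0 := by
    apply nonneg_neg_eq_zero hP
    · rw [← e1]; exact hpos _
    · rw [← e2]; exact hpos _
  have e3 : Q (η + Cplx.I R • ξ) (η + Cplx.I R • ξ)
      = Cplx.I R * (d - Cplx.conj d) := by
    rw [hadd, haddl, haddl, hsmul, hsmul, hsmull, hsmull,
      hηη, hξ, hcd, ← hd, conj_I]; ring
  have e4 : Q (η + (-(Cplx.I R)) • ξ) (η + (-(Cplx.I R)) • ξ)
      = -(Cplx.I R * (d - Cplx.conj d)) := by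
    rw [hadd, haddl, haddl, hsmul, hsmul, hsmull, hsmull,
      hηη, hξ, hcd, ← hd, map_neg, conj_I]; ring
  have hdiff0 : Cplx.I R * (d - Cplx.conj d) = 0 := by
    apply nonneg_neg_eq_zero hP
    · rw [← e3]; exact hpos _
    · rw [← e4]; exact hpos _
  have hdconj : d = Cplx.conj d := by
    have := congrArg (fun z => Cplx.I R * z) hdiff0
    simp only [mul_zero] at this
    rw [← mul_assoc, I_mul_I] at this
    linear_combination -this
  have hdd : d + d = 0 := by linear_combination hsum0 + hdconj
  obtain ⟨p, q, hpq⟩ := exists_coords d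
  have hcombo : algebraMap R (Cplx R) (p + p) + algebraMap R (Cplx R) (q + q) * Cplx.I R = 0 := by
    rw [map_add, map_add]
    linear_combination hdd - 2 * hpq
  obtain ⟨hp2, hq2⟩ := combo_unique hcombo
  have htwo : (1 : R) + 1 ∈ P := hP.2.1 _ (one_mem hP one_ne_zero) _ (one_mem hP one_ne_zero)
  have hp0 : p = 0 := by
    by_contra hp
    exact mul_ne_zero' hP (hP.2.2.2.1 _ htwo) hp (by linear_combination hp2)
  have hq0 : q = 0 := by
    by_contra hq
    exact mul_ne_zero' hP (hP.2.2.2.1 _ htwo) hq (by linear_combination hq2)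
  rw [hpq, hp0, hq0]
  simp

end Cone


end RieffelAux

open RieffelAux in
/-- Rieffel induction.  Let `A`, `B` be unital `*`-algebras over
`C = R(i)` and `E` a `B`-`A`-bimodule with an `A`-valued, completely positive inner
product `⟨·,·⟩ : E × E → A`, compatible with the `B`-action.  Let `(H, π)` be a
`*`-representation of `A`.  Then on `K̃ = E ⊗_A H` the formula
`⟨x ⊗ φ, y ⊗ ψ⟩ := ⟨φ, π(⟨x,y⟩)ψ⟩` extends to a well-defined Hermitian sesquilinear
form which is positive semidefinite, and the `B`-action `b · (x ⊗ φ) = (b·x) ⊗ φ`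
descends to the quotient `K = K̃ / K̃^⊥` by the degeneracy space and yields a
`*`-representation `ρ` of `B` on the pre-Hilbert space `K`.  (The pre-Hilbert space
`K` is presented below by the balanced bilinear map `T : E × H → K` with
`T(x, φ) = [x ⊗ φ]`, which has total image and implements the inner product.) -/
theorem rieffel_induction
    (R : Type u) [CommRing R] (P : Set R) (hP : IsOrderedCone P)
    (A : Type v) [Ring A] [Algebra (Cplx R) A] (SA : StarStructure R A)
    (B : Type v') [Ring B] [Algebra (Cplx R) B] (SB : StarStructure R B)
    (E : Type w) [AddCommGroup E] [Module (Cplx R) E]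
    -- right `A`-module structure on `E`
    (ra : E → A → E)
    (hra_add : ∀ (x y : E) (a : A), ra (x + y) a = ra x a + ra y a)
    (hra_add' : ∀ (x : E) (a b : A), ra x (a + b) = ra x a + ra x b)
    (hra_mul : ∀ (x : E) (a b : A), ra (ra x a) b = ra x (a * b))
    (hra_one : ∀ x : E, ra x 1 = x)
    (hra_smul : ∀ (z : Cplx R) (x : E) (a : A), ra (z • x) a = z • ra x a)
    (hra_smul' : ∀ (z : Cplx R) (x : E) (a : A), ra x (z • a) = z • ra x a)
    -- left `B`-module structure on `E`
    (lb : B → E → E)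
    (hlb_add : ∀ (b : B) (x y : E), lb b (x + y) = lb b x + lb b y)
    (hlb_add' : ∀ (b c : B) (x : E), lb (b + c) x = lb b x + lb c x)
    (hlb_mul : ∀ (b c : B) (x : E), lb (b * c) x = lb b (lb c x))
    (hlb_one : ∀ x : E, lb 1 x = x)
    (hlb_smul : ∀ (z : Cplx R) (b : B) (x : E), lb b (z • x) = z • lb b x)
    (hlb_smul' : ∀ (z : Cplx R) (b : B) (x : E), lb (z • b) x = z • lb b x)
    -- `E` is a bimodule
    (hbimod : ∀ (b : B) (x : E) (a : A), lb b (ra x a) = ra (lb b x) a)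
    -- the `A`-valued inner product on `E`
    (ipE : E → E → A)
    (hip_add : ∀ x y z' : E, ipE x (y + z') = ipE x y + ipE x z')
    (hip_smul : ∀ (z : Cplx R) (x y : E), ipE x (z • y) = z • ipE x y)
    (hip_herm : ∀ x y : E, ipE x y = SA.star (ipE y x))
    (hip_ra : ∀ (x y : E) (a : A), ipE x (ra y a) = ipE x y * a)
    (hip_lb : ∀ (b : B) (x y : E), ipE (lb b x) y = ipE x (lb (SB.star b) y))
    -- complete positivity of the inner product
    (hip_cp : ∀ (m : ℕ) (x : Fin m → E),
      IsPosMatrix P SA (Matrix.of fun i j => ipE (x i) (x j)))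
    -- a `*`-representation `(H, π)` of `A`
    (ρA : StarRep.{u, v, wH} R P A SA) :
    -- the induced inner product is positive semidefinite on `K̃ = E ⊗_A H`
    (∀ (m : ℕ) (x : Fin m → E) (φ : Fin m → ρA.carrier),
      Cplx.nonneg P (∑ i, ∑ j, ρA.ip.inner (φ i) (ρA.π (ipE (x i) (x j)) (φ j)))) ∧
    -- and it descends to a `*`-representation of `B` on `K = K̃ / K̃^⊥`
    ∃ (ρB : StarRep.{u, v', max w wH} R P B SB)
      (T : E → ρA.carrier → ρB.carrier),
      (∀ (x y : E) (φ : ρA.carrier), T (x + y) φ = T x φ + T y φ) ∧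
      (∀ (x : E) (φ ψ : ρA.carrier), T x (φ + ψ) = T x φ + T x ψ) ∧
      (∀ (z : Cplx R) (x : E) (φ : ρA.carrier), T (z • x) φ = z • T x φ) ∧
      (∀ (z : Cplx R) (x : E) (φ : ρA.carrier), T x (z • φ) = z • T x φ) ∧
      (∀ (x : E) (a : A) (φ : ρA.carrier), T (ra x a) φ = T x (ρA.π a φ)) ∧
      (∀ (x y : E) (φ ψ : ρA.carrier),
        ρB.ip.inner (T x φ) (T y ψ) = ρA.ip.inner φ (ρA.π (ipE x y) ψ)) ∧
      (∀ (b : B) (x : E) (φ : ρA.carrier), ρB.π b (T x φ) = T (lb b x) φ) ∧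
      (∀ k : ρB.carrier, ∃ (m : ℕ) (x : Fin m → E) (φ : Fin m → ρA.carrier),
        k = ∑ i, T (x i) (φ i)) := by
  classical
  obtain ⟨hPmul, hPadd, hPtri, hPnz, hPneg⟩ := hP
  have hP' : IsOrderedCone P := ⟨hPmul, hPadd, hPtri, hPnz, hPneg⟩
  -- helpers on E
  have ipE_add_left : ∀ (x x' y : E), ipE (x + x') y = ipE x y + ipE x' y := by
    intro x x' y
    rw [hip_herm, hip_add, SA.star_add, ← hip_herm, ← hip_herm]
  have ipE_smul_left : ∀ (z : Cplx R) (x y : E),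
      ipE (z • x) y = Cplx.conj z • ipE x y := by
    intro z x y
    rw [hip_herm, hip_smul, SA.star_smul, ← hip_herm]
  -- helpers on H
  have inH_zero_right : ∀ φ : ρA.carrier, ρA.ip.inner φ 0 = 0 := by
    intro φ
    have h := ρA.ip.inner_add_right φ 0 0
    rw [add_zero] at h
    exact left_eq_add.mp h
  have inH_add_left : ∀ φ ψ χ : ρA.carrier,
      ρA.ip.inner (φ + ψ) χ = ρA.ip.inner φ χ + ρA.ip.inner ψ χ := by
    intro φ ψ χ
    rw [ρA.ip.inner_herm, ρA.ip.inner_add_right, map_add, ← ρA.ip.inner_herm,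
      ← ρA.ip.inner_herm]
  have inH_smul_left : ∀ (z : Cplx R) (φ χ : ρA.carrier),
      ρA.ip.inner (z • φ) χ = Cplx.conj z * ρA.ip.inner φ χ := by
    intro z φ χ
    rw [ρA.ip.inner_herm, ρA.ip.inner_smul_right, map_mul, ← ρA.ip.inner_herm]
  have inH_sum_right : ∀ {ι : Type} (s : Finset ι) (f : ι → ρA.carrier) (φ : ρA.carrier),
      ρA.ip.inner φ (∑ i ∈ s, f i) = ∑ i ∈ s, ρA.ip.inner φ (f i) := by
    intro ι s f φ
    induction s using Finset.induction_on with
    | empty => simpa using inH_zero_right φ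
    | insert _ _ hx ih =>
      rw [Finset.sum_insert hx, Finset.sum_insert hx, ρA.ip.inner_add_right, ih]
  have inH_zero_left : ∀ φ : ρA.carrier, ρA.ip.inner 0 φ = 0 := by
    intro φ
    rw [ρA.ip.inner_herm, inH_zero_right, map_zero]
  have inH_sum_left : ∀ {ι : Type} (s : Finset ι) (f : ι → ρA.carrier) (φ : ρA.carrier),
      ρA.ip.inner (∑ i ∈ s, f i) φ = ∑ i ∈ s, ρA.ip.inner (f i) φ := by
    intro ι s f φ
    induction s using Finset.induction_on with
    | empty => simpa using inH_zero_left φ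
    | insert _ _ hx ih =>
      rw [Finset.sum_insert hx, Finset.sum_insert hx, inH_add_left, ih]
  have pi_sum : ∀ {ι : Type} (s : Finset ι) (f : ι → A) (ψ : ρA.carrier),
      ρA.π (∑ i ∈ s, f i) ψ = ∑ i ∈ s, ρA.π (f i) ψ := by
    intro ι s f ψ
    induction s using Finset.induction_on with
    | empty =>
      have h := ρA.π_add 0 0 ψ
      rw [add_zero] at h
      simpa using left_eq_add.mp h
    | insert _ _ hx ih =>
      rw [Finset.sum_insert hx, Finset.sum_insert hx, ρA.π_add, ih]
  -- Part 1: positivity of the induced form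
  have hpart1 : ∀ (m : ℕ) (x : Fin m → E) (φ : Fin m → ρA.carrier),
      Cplx.nonneg P (∑ i, ∑ j, ρA.ip.inner (φ i) (ρA.π (ipE (x i) (x j)) (φ j))) := by
    intro m x φ
    have hfun : IsPosMatFunctional P SA
        (fun N : Matrix (Fin m) (Fin m) A =>
          ∑ i, ∑ j, ρA.ip.inner (φ i) (ρA.π (N i j) (φ j))) := by
      refine ⟨?_, ?_, ?_⟩
      · intro M N
        simp only [Matrix.add_apply, ρA.π_add, ρA.ip.inner_add_right,
          Finset.sum_add_distrib]
      · intro z M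
        simp only [Matrix.smul_apply, ρA.π_smul, ρA.ip.inner_smul_right,
          Finset.mul_sum]
      · intro M
        have hrw : ∀ i j : Fin m,
            ρA.ip.inner (φ i) (ρA.π ((matStar SA M * M) i j) (φ j))
              = ∑ k, ρA.ip.inner (ρA.π (M k i) (φ i)) (ρA.π (M k j) (φ j)) := by
          intro i j
          rw [Matrix.mul_apply, pi_sum, inH_sum_right]
          refine Finset.sum_congr rfl fun k _ => ?_
          have hms : matStar SA M i k = SA.star (M k i) := rfl
          rw [hms, ρA.π_mul, ← ρA.π_star]
        have heq : (∑ i, ∑ j, ρA.ip.inner (φ i) (ρA.π ((matStar SA M * M) i j) (φ j)))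
            = ∑ k, ρA.ip.inner (∑ i, ρA.π (M k i) (φ i)) (∑ j, ρA.π (M k j) (φ j)) := by
          rw [Finset.sum_congr rfl fun i _ => Finset.sum_congr rfl fun j _ => hrw i j]
          rw [Finset.sum_congr rfl fun i (_ : i ∈ Finset.univ) =>
            Finset.sum_comm (s := Finset.univ) (t := Finset.univ)
              (f := fun j k => ρA.ip.inner (ρA.π (M k i) (φ i)) (ρA.π (M k j) (φ j)))]
          rw [Finset.sum_comm]
          refine Finset.sum_congr rfl fun k _ => ?_
          rw [inH_sum_left]
          exact Finset.sum_congr rfl fun i _ => (inH_sum_right _ _ _).symm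
        show Cplx.nonneg P (∑ i, ∑ j, ρA.ip.inner (φ i) (ρA.π ((matStar SA M * M) i j) (φ j)))
        rw [heq]
        refine nonneg_sum hP' _ _ fun k _ => ?_
        by_cases hz : (∑ i, ρA.π (M k i) (φ i)) = 0
        · rw [hz, inH_zero_right]
          exact nonneg_zero
        · obtain ⟨r, hr, he⟩ := ρA.ip.inner_posdef _ hz
          exact ⟨r, Or.inl hr, he⟩
    have h := hip_cp m x _ hfun
    simpa [Matrix.of_apply] using h
  refine ⟨hpart1, ?_⟩
  -- the tensor product K̃
  -- the sesquilinear form on K̃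
  have hBex : ∃ Bf : (TensorProduct (Cplx R) E ρA.carrier) →+ ((TensorProduct (Cplx R) E ρA.carrier) →ₗ[Cplx R] Cplx R),
      ∀ (x : E) (φ : ρA.carrier) (y : E) (ψ : ρA.carrier),
        Bf (x ⊗ₜ[Cplx R] φ) (y ⊗ₜ[Cplx R] ψ) = ρA.ip.inner φ (ρA.π (ipE x y) ψ) := by
    set g : E → ρA.carrier → ((TensorProduct (Cplx R) E ρA.carrier) →ₗ[Cplx R] Cplx R) := fun x φ =>
      TensorProduct.lift (LinearMap.mk₂ (Cplx R)
        (fun y ψ => ρA.ip.inner φ (ρA.π (ipE x y) ψ))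
        (fun y₁ y₂ ψ => by simp only [hip_add, ρA.π_add, ρA.ip.inner_add_right])
        (fun c y ψ => by
          simp only [hip_smul, ρA.π_smul, ρA.ip.inner_smul_right, smul_eq_mul])
        (fun y ψ₁ ψ₂ => by simp only [ρA.π_add_vec, ρA.ip.inner_add_right])
        (fun c y ψ => by
          simp only [ρA.π_smul_vec, ρA.ip.inner_smul_right, smul_eq_mul]))
      with hgdef
    have hg : ∀ (x : E) (φ : ρA.carrier) (y : E) (ψ : ρA.carrier),
        g x φ (y ⊗ₜ[Cplx R] ψ) = ρA.ip.inner φ (ρA.π (ipE x y) ψ) := by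
      intro x φ y ψ
      rw [hgdef]
      exact TensorProduct.lift.tmul _ _
    have hgadd_phi : ∀ (x : E) (φ₁ φ₂ : ρA.carrier), g x (φ₁ + φ₂) = g x φ₁ + g x φ₂ := by
      intro x φ₁ φ₂
      refine TensorProduct.ext' fun y ψ => ?_
      rw [LinearMap.add_apply, hg, hg, hg, inH_add_left]
    have hgadd_x : ∀ (x₁ x₂ : E) (φ : ρA.carrier), g (x₁ + x₂) φ = g x₁ φ + g x₂ φ := by
      intro x₁ x₂ φ
      refine TensorProduct.ext' fun y ψ => ?_
      rw [LinearMap.add_apply, hg, hg, hg, ipE_add_left, ρA.π_add,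
        ρA.ip.inner_add_right]
    refine ⟨TensorProduct.liftAddHom
      (AddMonoidHom.mk' (fun x => AddMonoidHom.mk' (g x) (hgadd_phi x))
        (fun x₁ x₂ => AddMonoidHom.ext fun φ => by
          simp only [AddMonoidHom.mk'_apply, AddMonoidHom.add_apply]
          exact hgadd_x x₁ x₂ φ)) ?_, ?_⟩
    · intro z x φ
      refine TensorProduct.ext' fun y ψ => ?_
      simp only [AddMonoidHom.mk'_apply]
      rw [hg, hg, ipE_smul_left, ρA.π_smul, ρA.ip.inner_smul_right, inH_smul_left]
    · intro x φ y ψ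
      rw [TensorProduct.liftAddHom_tmul]
      exact hg x φ y ψ
  obtain ⟨Bf, hBtmul⟩ := hBex
  -- Hermitian symmetry of Bf
  have hBherm : ∀ ξ η : (TensorProduct (Cplx R) E ρA.carrier), Bf ξ η = Cplx.conj (Bf η ξ) := by
    intro ξ η
    induction ξ using TensorProduct.induction_on with
    | zero => simp
    | tmul x φ =>
      induction η using TensorProduct.induction_on with
      | zero => simp
      | tmul y ψ =>
        rw [hBtmul, hBtmul]
        rw [hip_herm x y, ← ρA.π_star, ρA.ip.inner_herm]
      | add η₁ η₂ ih1 ih2 =>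
        rw [(Bf _).map_add, map_add, LinearMap.add_apply, map_add, ih1, ih2]
    | add ξ₁ ξ₂ ih1 ih2 =>
      rw [map_add, LinearMap.add_apply, (Bf η).map_add, map_add, ih1, ih2]
  -- every element of K̃ is a finite sum of simple tensors
  have hsumrep : ∀ ξ : (TensorProduct (Cplx R) E ρA.carrier), ∃ (m : ℕ) (x : Fin m → E) (φ : Fin m → ρA.carrier),
      ξ = ∑ i, (x i) ⊗ₜ[Cplx R] (φ i) := by
    intro ξ
    induction ξ using TensorProduct.induction_on with
    | zero => exact ⟨0, fun i => i.elim0, fun i => i.elim0, by simp⟩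
    | tmul x φ => exact ⟨1, fun _ => x, fun _ => φ, by simp⟩
    | add ξ₁ ξ₂ ih1 ih2 =>
      obtain ⟨m₁, x₁, φ₁, rfl⟩ := ih1
      obtain ⟨m₂, x₂, φ₂, rfl⟩ := ih2
      refine ⟨m₁ + m₂, Fin.append x₁ x₂, Fin.append φ₁ φ₂, ?_⟩
      rw [Fin.sum_univ_add]
      congr 1
      · exact Finset.sum_congr rfl fun i _ => by
          rw [Fin.append_left, Fin.append_left]
      · exact Finset.sum_congr rfl fun i _ => by
          rw [Fin.append_right, Fin.append_right]
  -- positivity of Bf on the diagonal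
  have hBpos : ∀ ξ : (TensorProduct (Cplx R) E ρA.carrier), Cplx.nonneg P (Bf ξ ξ) := by
    intro ξ
    obtain ⟨m, x, φ, rfl⟩ := hsumrep ξ
    have h1 : ∀ η, Bf (∑ i, (x i) ⊗ₜ[Cplx R] (φ i)) η = ∑ i, Bf ((x i) ⊗ₜ[Cplx R] (φ i)) η := by
      intro η
      rw [map_sum, LinearMap.sum_apply]
    have : Bf (∑ i, (x i) ⊗ₜ[Cplx R] (φ i)) (∑ i, (x i) ⊗ₜ[Cplx R] (φ i))
        = ∑ i, ∑ j, ρA.ip.inner (φ i) (ρA.π (ipE (x i) (x j)) (φ j)) := by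
      rw [h1]
      refine Finset.sum_congr rfl fun i _ => ?_
      rw [map_sum]
      exact Finset.sum_congr rfl fun j _ => hBtmul _ _ _ _
    rw [this]
    exact hpart1 m x φ
  -- the degeneracy subspace
  set Nsub : Submodule (Cplx R) (TensorProduct (Cplx R) E ρA.carrier) :=
    { carrier := {ξ | ∀ η : (TensorProduct (Cplx R) E ρA.carrier), Bf η ξ = 0}
      add_mem' := fun ha hb η => by rw [(Bf η).map_add, ha η, hb η, add_zero]
      zero_mem' := fun η => (Bf η).map_zero
      smul_mem' := fun z ξ hξ η => by rw [(Bf η).map_smul, hξ η, smul_zero] }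
    with hNsub
  have hmemN : ∀ ξ : (TensorProduct (Cplx R) E ρA.carrier), ξ ∈ Nsub ↔ ∀ η : (TensorProduct (Cplx R) E ρA.carrier), Bf η ξ = 0 := fun ξ => Iff.rfl
  -- degenerate Cauchy-Schwarz
  have hcs : ∀ ξ : (TensorProduct (Cplx R) E ρA.carrier), Bf ξ ξ = 0 → ξ ∈ Nsub := by
    intro ξ hξ η
    exact cs_degenerate hP' (fun v w => Bf v w)
      (fun v w u => (Bf v).map_add w u)
      (fun z v w => by
        show (Bf v) (z • w) = z * (Bf v) w
        rw [map_smul, smul_eq_mul])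
      hBherm hBpos hξ
  -- the quotient inner product
  have hBKex : ∃ BK : ((TensorProduct (Cplx R) E ρA.carrier) ⧸ Nsub) → ((TensorProduct (Cplx R) E ρA.carrier) ⧸ Nsub) →ₗ[Cplx R] Cplx R,
      ∀ ξ η : (TensorProduct (Cplx R) E ρA.carrier), BK (Submodule.Quotient.mk ξ) (Submodule.Quotient.mk η) = Bf ξ η := by
    have hker : ∀ ξ : (TensorProduct (Cplx R) E ρA.carrier), Nsub ≤ LinearMap.ker (Bf ξ) := by
      intro ξ n hn
      exact hn ξ
    have hwd : ∀ a b : (TensorProduct (Cplx R) E ρA.carrier), Nsub.quotientRel a b →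
        Nsub.liftQ (Bf a) (hker a) = Nsub.liftQ (Bf b) (hker b) := by
      intro a b hab
      have hmem : a - b ∈ Nsub := (Submodule.quotientRel_def Nsub).mp hab
      refine LinearMap.ext fun k => ?_
      obtain ⟨η, rfl⟩ := Submodule.Quotient.mk_surjective Nsub k
      rw [Submodule.liftQ_apply, Submodule.liftQ_apply]
      have h1 : Bf (a - b) η = 0 := by
        rw [hBherm]
        rw [hmem η, map_zero]
      rw [map_sub, LinearMap.sub_apply] at h1
      exact sub_eq_zero.mp h1
    refine ⟨fun k => Quotient.liftOn' k (fun ξ => Nsub.liftQ (Bf ξ) (hker ξ)) hwd, ?_⟩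
    intro ξ η
    rfl
  obtain ⟨BK, hBK⟩ := hBKex
  -- the B-action on K̃
  have hπex : ∃ πKt : B → (TensorProduct (Cplx R) E ρA.carrier) →ₗ[Cplx R] (TensorProduct (Cplx R) E ρA.carrier),
      ∀ (b : B) (x : E) (φ : ρA.carrier),
        πKt b (x ⊗ₜ[Cplx R] φ) = (lb b x) ⊗ₜ[Cplx R] φ := by
    refine ⟨fun b => TensorProduct.map
      { toFun := lb b, map_add' := hlb_add b, map_smul' := fun z x => hlb_smul z b x }
      LinearMap.id, fun b x φ => ?_⟩
    rw [TensorProduct.map_tmul]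
    rfl
  obtain ⟨πKt, hπtmul⟩ := hπex
  -- adjointness of the B-action w.r.t. the form
  have hadj : ∀ (b : B) (ξ η : TensorProduct (Cplx R) E ρA.carrier), Bf η (πKt b ξ) = Bf (πKt (SB.star b) η) ξ := by
    intro b ξ η
    induction ξ using TensorProduct.induction_on with
    | zero => simp
    | tmul x φ =>
      induction η using TensorProduct.induction_on with
      | zero => simp
      | tmul y ψ =>
        rw [hπtmul, hπtmul, hBtmul, hBtmul]
        have key : ipE y (lb b x) = ipE (lb (SB.star b) y) x := by
          rw [hip_herm, hip_lb, ← hip_herm]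
        rw [key]
      | add η₁ η₂ ih1 ih2 =>
        rw [map_add, LinearMap.add_apply, (πKt _).map_add, map_add,
          LinearMap.add_apply, ih1, ih2]
    | add ξ₁ ξ₂ ih1 ih2 =>
      rw [(πKt b).map_add, (Bf η).map_add, (Bf _).map_add, ih1, ih2]
  have hmapN : ∀ b : B, Nsub ≤ Submodule.comap (πKt b) Nsub := by
    intro b n hn η
    rw [hadj]
    exact hn _
  have hρex : ∃ ρπ : B → ((TensorProduct (Cplx R) E ρA.carrier) ⧸ Nsub) →ₗ[Cplx R] ((TensorProduct (Cplx R) E ρA.carrier) ⧸ Nsub),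
      ∀ (b : B) (ξ : TensorProduct (Cplx R) E ρA.carrier), ρπ b (Submodule.Quotient.mk ξ)
        = Submodule.Quotient.mk (πKt b ξ) :=
    ⟨fun b => Nsub.mapQ Nsub (πKt b) (hmapN b),
     fun b ξ => Submodule.mapQ_apply Nsub Nsub (πKt b) ξ⟩
  obtain ⟨ρπ, hρmk⟩ := hρex
  -- pointwise laws for the B-action upstairs
  have hπ_one : ∀ ξ : TensorProduct (Cplx R) E ρA.carrier, πKt 1 ξ = ξ := by
    intro ξ
    induction ξ using TensorProduct.induction_on with
    | zero => simp
    | tmul x φ => rw [hπtmul, hlb_one]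
    | add ξ₁ ξ₂ ih1 ih2 => rw [map_add, ih1, ih2]
  have hπ_addB : ∀ (b c : B) (ξ : TensorProduct (Cplx R) E ρA.carrier), πKt (b + c) ξ = πKt b ξ + πKt c ξ := by
    intro b c ξ
    induction ξ using TensorProduct.induction_on with
    | zero => simp
    | tmul x φ => rw [hπtmul, hπtmul, hπtmul, hlb_add', TensorProduct.add_tmul]
    | add ξ₁ ξ₂ ih1 ih2 =>
      rw [map_add, map_add, map_add, ih1, ih2]
      abel
  have hπ_smulB : ∀ (z : Cplx R) (b : B) (ξ : TensorProduct (Cplx R) E ρA.carrier), πKt (z • b) ξ = z • πKt b ξ := by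
    intro z b ξ
    induction ξ using TensorProduct.induction_on with
    | zero => simp
    | tmul x φ => rw [hπtmul, hπtmul, hlb_smul', TensorProduct.smul_tmul']
    | add ξ₁ ξ₂ ih1 ih2 => rw [map_add, map_add, ih1, ih2, smul_add]
  have hπ_mulB : ∀ (b c : B) (ξ : TensorProduct (Cplx R) E ρA.carrier), πKt (b * c) ξ = πKt b (πKt c ξ) := by
    intro b c ξ
    induction ξ using TensorProduct.induction_on with
    | zero => simp
    | tmul x φ => rw [hπtmul, hπtmul, hπtmul, hlb_mul]
    | add ξ₁ ξ₂ ih1 ih2 => rw [map_add, map_add, map_add, ih1, ih2]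
  -- properties of the quotient structures
  have hherm : ∀ k k' : (TensorProduct (Cplx R) E ρA.carrier) ⧸ Nsub, BK k k' = Cplx.conj (BK k' k) := by
    intro k k'
    obtain ⟨ξ, rfl⟩ := Submodule.Quotient.mk_surjective Nsub k
    obtain ⟨η, rfl⟩ := Submodule.Quotient.mk_surjective Nsub k'
    rw [hBK, hBK]
    exact hBherm ξ η
  have hposdef : ∀ k : (TensorProduct (Cplx R) E ρA.carrier) ⧸ Nsub, k ≠ 0 → Cplx.pos P (BK k k) := by
    intro k hk
    obtain ⟨ξ, rfl⟩ := Submodule.Quotient.mk_surjective Nsub k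
    have hnotin : ξ ∉ Nsub := fun h => hk ((Submodule.Quotient.mk_eq_zero Nsub).mpr h)
    have hBξ : Bf ξ ξ ≠ 0 := fun h0 => hnotin (hcs ξ h0)
    rw [hBK]
    exact pos_of_nonneg_ne (hBpos ξ) hBξ
  have hρ_one : ∀ k : (TensorProduct (Cplx R) E ρA.carrier) ⧸ Nsub, ρπ 1 k = k := by
    intro k
    obtain ⟨ξ, rfl⟩ := Submodule.Quotient.mk_surjective Nsub k
    rw [hρmk, hπ_one]
  have hρ_add : ∀ (b c : B) (k : (TensorProduct (Cplx R) E ρA.carrier) ⧸ Nsub), ρπ (b + c) k = ρπ b k + ρπ c k := by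
    intro b c k
    obtain ⟨ξ, rfl⟩ := Submodule.Quotient.mk_surjective Nsub k
    rw [hρmk, hρmk, hρmk, hπ_addB, Submodule.Quotient.mk_add]
  have hρ_smul : ∀ (z : Cplx R) (b : B) (k : (TensorProduct (Cplx R) E ρA.carrier) ⧸ Nsub),
      ρπ (z • b) k = z • ρπ b k := by
    intro z b k
    obtain ⟨ξ, rfl⟩ := Submodule.Quotient.mk_surjective Nsub k
    rw [hρmk, hρmk, hπ_smulB, Submodule.Quotient.mk_smul]
  have hρ_mul : ∀ (b c : B) (k : (TensorProduct (Cplx R) E ρA.carrier) ⧸ Nsub), ρπ (b * c) k = ρπ b (ρπ c k) := by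
    intro b c k
    obtain ⟨ξ, rfl⟩ := Submodule.Quotient.mk_surjective Nsub k
    rw [hρmk, hρmk, hρmk, hπ_mulB]
  have hρ_star : ∀ (b : B) (k k' : (TensorProduct (Cplx R) E ρA.carrier) ⧸ Nsub),
      BK (ρπ b k) k' = BK k (ρπ (SB.star b) k') := by
    intro b k k'
    obtain ⟨ξ, rfl⟩ := Submodule.Quotient.mk_surjective Nsub k
    obtain ⟨η, rfl⟩ := Submodule.Quotient.mk_surjective Nsub k'
    rw [hρmk, hρmk, hBK, hBK, hBherm, hadj, ← hBherm]
  -- properties of T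
  have hT_add1 : ∀ (x y : E) (φ : ρA.carrier),
      (Submodule.Quotient.mk ((x + y) ⊗ₜ[Cplx R] φ) : (TensorProduct (Cplx R) E ρA.carrier) ⧸ Nsub)
        = Submodule.Quotient.mk (x ⊗ₜ[Cplx R] φ) + Submodule.Quotient.mk (y ⊗ₜ[Cplx R] φ) := by
    intro x y φ
    rw [TensorProduct.add_tmul, Submodule.Quotient.mk_add]
  have hT_add2 : ∀ (x : E) (φ ψ : ρA.carrier),
      (Submodule.Quotient.mk (x ⊗ₜ[Cplx R] (φ + ψ)) : (TensorProduct (Cplx R) E ρA.carrier) ⧸ Nsub)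
        = Submodule.Quotient.mk (x ⊗ₜ[Cplx R] φ) + Submodule.Quotient.mk (x ⊗ₜ[Cplx R] ψ) := by
    intro x φ ψ
    rw [TensorProduct.tmul_add, Submodule.Quotient.mk_add]
  have hT_smul1 : ∀ (z : Cplx R) (x : E) (φ : ρA.carrier),
      (Submodule.Quotient.mk ((z • x) ⊗ₜ[Cplx R] φ) : (TensorProduct (Cplx R) E ρA.carrier) ⧸ Nsub)
        = z • Submodule.Quotient.mk (x ⊗ₜ[Cplx R] φ) := by
    intro z x φ
    rw [← TensorProduct.smul_tmul', Submodule.Quotient.mk_smul]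
  have hT_smul2 : ∀ (z : Cplx R) (x : E) (φ : ρA.carrier),
      (Submodule.Quotient.mk (x ⊗ₜ[Cplx R] (z • φ)) : (TensorProduct (Cplx R) E ρA.carrier) ⧸ Nsub)
        = z • Submodule.Quotient.mk (x ⊗ₜ[Cplx R] φ) := by
    intro z x φ
    rw [TensorProduct.tmul_smul, Submodule.Quotient.mk_smul]
  have hT_ra : ∀ (x : E) (a : A) (φ : ρA.carrier),
      (Submodule.Quotient.mk ((ra x a) ⊗ₜ[Cplx R] φ) : (TensorProduct (Cplx R) E ρA.carrier) ⧸ Nsub)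
        = Submodule.Quotient.mk (x ⊗ₜ[Cplx R] (ρA.π a φ)) := by
    intro x a φ
    rw [Submodule.Quotient.eq]
    intro η
    induction η using TensorProduct.induction_on with
    | zero => simp
    | tmul y ψ =>
      rw [(Bf _).map_sub, hBtmul, hBtmul, hip_ra, ρA.π_mul, sub_self]
    | add η₁ η₂ ih1 ih2 =>
      rw [map_add, LinearMap.add_apply, ih1, ih2, add_zero]
  have hT_inner : ∀ (x y : E) (φ ψ : ρA.carrier),
      BK (Submodule.Quotient.mk (x ⊗ₜ[Cplx R] φ)) (Submodule.Quotient.mk (y ⊗ₜ[Cplx R] ψ))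
        = ρA.ip.inner φ (ρA.π (ipE x y) ψ) := by
    intro x y φ ψ
    rw [hBK, hBtmul]
  have hT_act : ∀ (b : B) (x : E) (φ : ρA.carrier),
      ρπ b (Submodule.Quotient.mk (x ⊗ₜ[Cplx R] φ))
        = Submodule.Quotient.mk ((lb b x) ⊗ₜ[Cplx R] φ) := by
    intro b x φ
    rw [hρmk, hπtmul]
  have hT_total : ∀ k : (TensorProduct (Cplx R) E ρA.carrier) ⧸ Nsub,
      ∃ (m : ℕ) (x : Fin m → E) (φ : Fin m → ρA.carrier),
        k = ∑ i, Submodule.Quotient.mk ((x i) ⊗ₜ[Cplx R] (φ i)) := by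
    intro k
    obtain ⟨ξ, rfl⟩ := Submodule.Quotient.mk_surjective Nsub k
    obtain ⟨m, x, φ, rfl⟩ := hsumrep ξ
    refine ⟨m, x, φ, ?_⟩
    rw [← Submodule.mkQ_apply, map_sum]
    simp [Submodule.mkQ_apply]
  -- assemble the *-representation of B on K
  exact ⟨{ carrier := (TensorProduct (Cplx R) E ρA.carrier) ⧸ Nsub
           grp := inferInstance
           mod := inferInstance
           ip := { inner := fun k k' => BK k k'
                   inner_add_right := fun φ ψ χ => (BK φ).map_add ψ χ
                   inner_smul_right := fun z φ ψ => by
                     show BK φ (z • ψ) = z * BK φ ψ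
                     rw [map_smul, smul_eq_mul]
                   inner_herm := hherm
                   inner_posdef := hposdef }
           π := fun b k => ρπ b k
           π_add_vec := fun b φ ψ => (ρπ b).map_add φ ψ
           π_smul_vec := fun b z φ => (ρπ b).map_smul z φ
           π_one := hρ_one
           π_add := hρ_add
           π_smul := hρ_smul
           π_mul := hρ_mul
           π_star := hρ_star },
         fun x φ => Submodule.Quotient.mk (x ⊗ₜ[Cplx R] φ),
         hT_add1, hT_add2, hT_smul1, hT_smul2, hT_ra, hT_inner, hT_act, hT_total⟩
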